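/- There is no positive path entirely contained in the truly hyperbolic subset of Sp(2) joining D(1/2) = diag(1/2, 2) to D(2) = diag(2, 1/2). That is, if γ : [0,1] → Sp(2) is a positive path with γ(0) = diag(1/2,2) and γ(1) = diag(2,1/2), then there exists t ∈ [0,1] such that γ(t) has an eigenvalue on the unit circle. -/

import Mathlib

open Matrix Set
open Filter Topology

noncomputable section

def J2 : Matrix (Fin 2) (Fin 2) ℝ := !![0, -1; 1, 0]

/-- There is no positive path inside the truly hyperbolic part of `Sp(2)` from
`diag(1/2, 2)` to `diag(2, 1/2)`: any positive path in `Sp(2)` between these two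
matrices has, at some time `t ∈ [0,1]`, an eigenvalue on the unit circle. -/
theorem no_truly_hyperbolic_positive_path_sp2
    (γ P : ℝ → Matrix (Fin 2) (Fin 2) ℝ)
    (h0 : γ 0 = !![(1:ℝ)/2, 0; 0, 2]) (h1 : γ 1 = !![(2:ℝ), 0; 0, 1/2])
    (hdet : ∀ t ∈ Icc (0:ℝ) 1, (γ t).det = 1)
    (hPc : ∀ i j, ContinuousOn (fun t => P t i j) (Icc (0:ℝ) 1))
    (hP : ∀ t ∈ Icc (0:ℝ) 1, (P t)ᵀ = P t ∧ (P t).PosDef)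
    (hd : ∀ t ∈ Icc (0:ℝ) 1, ∀ i j,
      HasDerivAt (fun s => γ s i j) ((J2 * P t * γ t) i j) t) :
    ∃ t ∈ Icc (0:ℝ) 1, ∃ z : ℂ, ‖z‖ = 1 ∧
      ∃ v : Fin 2 → ℂ, v ≠ 0 ∧ ((γ t).map (fun x : ℝ => (x : ℂ))) *ᵥ v = z • v := by
  -- continuity of the entries
  have hcont : ∀ i j, ContinuousOn (fun t => γ t i j) (Icc (0:ℝ) 1) := by
    intro i j t ht
    exact (hd t ht i j).continuousAt.continuousWithinAt
  -- positivity of P t 0 0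
  have hP00 : ∀ t ∈ Icc (0:ℝ) 1, 0 < P t 0 0 := by
    intro t ht
    have hx : (![1, 0] : Fin 2 → ℝ) ≠ 0 := by
      intro h
      have := congr_fun h 0
      norm_num at this
    have := (hP t ht).2.dotProduct_mulVec_pos hx
    simpa [dotProduct, mulVec, Fin.sum_univ_two] using this
  -- the derivative of the bottom-left entry
  have hderiv : ∀ t ∈ Icc (0:ℝ) 1, HasDerivAt (fun s => γ s 1 0)
      (P t 0 0 * γ t 0 0 + P t 0 1 * γ t 1 0) t := by
    intro t ht
    have := hd t ht 1 0
    have hentry : (J2 * P t * γ t) 1 0 = P t 0 0 * γ t 0 0 + P t 0 1 * γ t 1 0 := by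
      simp [J2, Matrix.mul_apply, Matrix.vecMul, dotProduct, Fin.sum_univ_two]
    rwa [hentry] at this
  -- slope fact: near a zero of c with positive derivative, slopes are positive
  have slopeFact : ∀ x ∈ Icc (0:ℝ) 1, γ x 1 0 = 0 → 0 < γ x 0 0 →
      ∃ ε > 0, ∀ t, t ≠ x → dist t x < ε → 0 < γ t 1 0 / (t - x) := by
    intro x hx hc hpos
    have hD : HasDerivAt (fun s => γ s 1 0) (P x 0 0 * γ x 0 0) x := by
      have := hderiv x hx
      rwa [hc, mul_zero, add_zero] at this
    have hd' : 0 < P x 0 0 * γ x 0 0 := mul_pos (hP00 x hx) hpos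
    have hslope := hasDerivAt_iff_tendsto_slope.1 hD
    have hev : ∀ᶠ t in 𝓝[≠] x, 0 < slope (fun s => γ s 1 0) x t :=
      hslope.eventually (eventually_gt_nhds hd')
    rw [eventually_nhdsWithin_iff, Metric.eventually_nhds_iff] at hev
    obtain ⟨ε, hε, hev⟩ := hev
    refine ⟨ε, hε, fun t htn htd => ?_⟩
    have := hev htd htn
    rwa [slope_def_field, hc, sub_zero, div_eq_inv_mul, ← div_eq_inv_mul] at this
  -- key claim: there is a time with c = 0 and a ≤ 0
  have hkey : ∃ t₀ ∈ Icc (0:ℝ) 1, γ t₀ 1 0 = 0 ∧ γ t₀ 0 0 ≤ 0 := by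
    by_contra hcon
    push_neg at hcon
    -- so at every zero of c in [0,1], a > 0
    have hA : ∀ t ∈ Icc (0:ℝ) 1, γ t 1 0 = 0 → 0 < γ t 0 0 := hcon
    set A : Set ℝ := {t | t ∈ Icc (0:ℝ) 1 ∧ γ t 1 0 < 0} with hAdef
    -- A is nonempty: c is negative a bit before 1
    have hc1 : γ 1 1 0 = 0 := by rw [h1]; norm_num
    have ha1 : (0:ℝ) < γ 1 0 0 := by rw [h1]; norm_num
    obtain ⟨ε, hε, hev⟩ := slopeFact 1 (by norm_num) hc1 ha1
    have hAne : A.Nonempty := by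
      refine ⟨max (1/2) (1 - ε/2), ?_, ?_⟩
      · constructor
        · positivity
        · apply max_le (by norm_num); linarith
      · have hlt : max (1/2) (1 - ε/2) < 1 := by
          apply max_lt (by norm_num); linarith
        have hne : max (1/2) (1 - ε/2) ≠ 1 := ne_of_lt hlt
        have hdist : dist (max (1/2) (1 - ε/2)) 1 < ε := by
          rw [Real.dist_eq, abs_of_nonpos (by linarith)]
          have : 1 - ε/2 ≤ max (1/2) (1 - ε/2) := le_max_right _ _
          linarith
        have hsl := hev _ hne hdist
        have hneg : max (1/2) (1 - ε/2) - 1 < 0 := by linarith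
        rcases div_pos_iff.1 hsl with ⟨_, h2'⟩ | ⟨h1', _⟩
        · linarith
        · exact h1'
    have hAbdd : BddBelow A := ⟨0, fun t ht => ht.1.1⟩
    set τ := sInf A with hτdef
    have hτ0 : 0 ≤ τ := le_csInf hAne fun t ht => ht.1.1
    have hτ1 : τ ≤ 1 := by
      obtain ⟨u, hu⟩ := hAne
      exact le_trans (csInf_le hAbdd hu) hu.1.2
    have hτIcc : τ ∈ Icc (0:ℝ) 1 := ⟨hτ0, hτ1⟩
    -- points strictly before τ have c ≥ 0
    have hge : ∀ t ∈ Icc (0:ℝ) 1, t < τ → 0 ≤ γ t 1 0 := by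
      intro t ht htτ
      by_contra hneg
      push_neg at hneg
      have : t ∈ A := ⟨ht, hneg⟩
      exact absurd (csInf_le hAbdd this) (not_le.2 htτ)
    -- c τ = 0
    have hcτ : γ τ 1 0 = 0 := by
      rcases lt_trichotomy (γ τ 1 0) 0 with hlt | heq | hgt
      · -- c τ < 0 : contradiction
        rcases eq_or_lt_of_le hτ0 with h0τ | h0τ
        · rw [← h0τ, h0] at hlt; norm_num at hlt
        · -- τ > 0 : continuity gives c < 0 slightly before τ
          have hcw := (hcont 1 0) τ hτIcc
          have hev2 : ∀ᶠ t in 𝓝[Icc (0:ℝ) 1] τ, γ t 1 0 < 0 :=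
            hcw.eventually (eventually_lt_nhds hlt)
          rw [eventually_nhdsWithin_iff, Metric.eventually_nhds_iff] at hev2
          obtain ⟨δ, hδ, hev2⟩ := hev2
          set t := max (τ/2) (τ - δ/2) with htdef
          have htlt : t < τ := max_lt (by linarith) (by linarith)
          have htIcc : t ∈ Icc (0:ℝ) 1 := by
            constructor
            · have := le_max_left (τ/2) (τ - δ/2); linarith
            · linarith
          have hdt : dist t τ < δ := by
            rw [Real.dist_eq, abs_of_nonpos (by linarith)]
            have := le_max_right (τ/2) (τ - δ/2); linarith
          have := hev2 hdt htIcc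
          have : t ∈ A := ⟨htIcc, this⟩
          exact absurd (csInf_le hAbdd this) (not_le.2 htlt)
      · exact heq
      · -- c τ > 0 : contradiction with points of A near τ
        have hcw := (hcont 1 0) τ hτIcc
        have hev2 : ∀ᶠ t in 𝓝[Icc (0:ℝ) 1] τ, 0 < γ t 1 0 :=
          hcw.eventually (eventually_gt_nhds hgt)
        rw [eventually_nhdsWithin_iff, Metric.eventually_nhds_iff] at hev2
        obtain ⟨δ, hδ, hev2⟩ := hev2
        obtain ⟨u, huA, hu⟩ := (csInf_lt_iff hAbdd hAne).1 (by linarith : sInf A < τ + δ)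
        have huτ : τ ≤ u := csInf_le hAbdd huA
        have hdu : dist u τ < δ := by
          rw [Real.dist_eq, abs_of_nonneg (by linarith)]; linarith
        have := hev2 hdu huA.1
        exact absurd huA.2 (not_lt.2 (le_of_lt this))
    -- a τ > 0, so c has positive derivative at τ
    have haτ : 0 < γ τ 0 0 := hA τ hτIcc hcτ
    obtain ⟨ε', hε', hev'⟩ := slopeFact τ hτIcc hcτ haτ
    rcases eq_or_lt_of_le hτ0 with h0τ | h0τ
    · -- τ = 0 : points of A arbitrarily close to 0 from right, but slopes positive
      obtain ⟨u, huA, hu⟩ := (csInf_lt_iff hAbdd hAne).1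
        (by rw [← hτdef, ← h0τ]; linarith : sInf A < ε')
      have huτ : τ ≤ u := csInf_le hAbdd huA
      have hτeq : τ = 0 := h0τ.symm
      have hune : u ≠ τ := by
        intro h
        have hx : γ u 1 0 < 0 := huA.2
        rw [h, hcτ] at hx
        exact lt_irrefl 0 hx
      have hdu : dist u τ < ε' := by
        rw [Real.dist_eq, abs_of_nonneg (by linarith)]
        linarith
      have hslp := hev' u hune hdu
      have hupos : 0 < u - τ := by
        rcases lt_or_eq_of_le huτ with h | h
        · linarith
        · exact absurd h.symm hune
      have : 0 < γ u 1 0 := by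
        have hx := div_pos_iff.1 hslp
        rcases hx with ⟨h1', _⟩ | ⟨_, h2'⟩
        · exact h1'
        · linarith
      exact absurd huA.2 (not_lt.2 (le_of_lt this))
    · -- τ > 0 : c should be negative slightly before τ, contradicting hge
      set t := max (τ/2) (τ - ε'/2) with htdef
      have htlt : t < τ := max_lt (by linarith) (by linarith)
      have htIcc : t ∈ Icc (0:ℝ) 1 := by
        constructor
        · have := le_max_left (τ/2) (τ - ε'/2); linarith
        · linarith
      have hdt : dist t τ < ε' := by
        rw [Real.dist_eq, abs_of_nonpos (by linarith)]
        have := le_max_right (τ/2) (τ - ε'/2); linarith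
      have hslp := hev' t (ne_of_lt htlt) hdt
      have htneg : t - τ < 0 := by linarith
      have : γ t 1 0 < 0 := by
        have hx := div_pos_iff.1 hslp
        rcases hx with ⟨_, h1'⟩ | ⟨h2', _⟩
        · linarith
        · exact h2'
      exact absurd (hge t htIcc htlt) (not_le.2 this)
  -- use the key claim
  obtain ⟨t₀, ht₀, hc₀, ha₀⟩ := hkey
  -- det = 1 gives a*d = 1 at t₀, so a < 0 and trace ≤ -2
  have hdet₀ : γ t₀ 0 0 * γ t₀ 1 1 - γ t₀ 0 1 * γ t₀ 1 0 = 1 := by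
    have := hdet t₀ ht₀
    rwa [Matrix.det_fin_two] at this
  have had : γ t₀ 0 0 * γ t₀ 1 1 = 1 := by rw [hc₀] at hdet₀; linarith
  have haneg : γ t₀ 0 0 < 0 := by
    rcases lt_or_eq_of_le ha₀ with h | h
    · exact h
    · rw [h, zero_mul] at had; norm_num at had
  have htr : γ t₀ 0 0 + γ t₀ 1 1 ≤ -2 := by
    nlinarith [sq_nonneg (γ t₀ 0 0 + 1)]
  -- IVT: trace hits 2 on [0, t₀]
  have htrc : ContinuousOn (fun t => γ t 0 0 + γ t 1 1) (Icc 0 t₀) := by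
    apply ContinuousOn.add
    · exact (hcont 0 0).mono (Icc_subset_Icc le_rfl ht₀.2)
    · exact (hcont 1 1).mono (Icc_subset_Icc le_rfl ht₀.2)
  have htr0 : γ 0 0 0 + γ 0 1 1 = 5/2 := by rw [h0]; norm_num
  have h2mem : (2:ℝ) ∈ Icc (γ t₀ 0 0 + γ t₀ 1 1) (γ 0 0 0 + γ 0 1 1) := by
    constructor <;> [linarith; linarith]
  obtain ⟨s, hs, hfs⟩ := intermediate_value_Icc' ht₀.1 htrc h2mem
  have hsIcc : s ∈ Icc (0:ℝ) 1 := ⟨hs.1, le_trans hs.2 ht₀.2⟩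
  -- build the eigenvector for eigenvalue 1
  refine ⟨s, hsIcc, 1, by simp, ?_⟩
  set A := (γ s).map (fun x : ℝ => (x : ℂ)) with hAdef
  have hdetM : (A - 1).det = 0 := by
    have hds : γ s 0 0 * γ s 1 1 - γ s 0 1 * γ s 1 0 = 1 := by
      have := hdet s hsIcc
      rwa [Matrix.det_fin_two] at this
    have hts : γ s 0 0 + γ s 1 1 = 2 := hfs
    rw [Matrix.det_fin_two]
    simp only [Matrix.sub_apply, Matrix.map_apply, Matrix.one_apply, hAdef]
    norm_num
    have h1c : ((γ s 0 0 : ℂ) + γ s 1 1) = 2 := by exact_mod_cast hts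
    have h2c : ((γ s 0 0 : ℂ) * γ s 1 1 - γ s 0 1 * γ s 1 0) = 1 := by exact_mod_cast hds
    ring_nf
    linear_combination h2c - h1c
  obtain ⟨v, hv, hMv⟩ := Matrix.exists_mulVec_eq_zero_iff.2 hdetM
  refine ⟨v, hv, ?_⟩
  rw [Matrix.sub_mulVec, Matrix.one_mulVec, sub_eq_zero] at hMv
  rw [hMv, one_smul]
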